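/- The two-element family {ω, ω*} is Ex-learnable: there exists a learner M such that for every structure S that is a copy of ω, M S s is eventually constantly the conjecture for ω, and for every structure S that is a copy of ω*, M S s is eventually constantly the conjecture for ω*. -/

import Mathlib

/-- A structure on domain ℕ: a binary relation given as a map to `Bool`. -/
abbrev Struc := ℕ → ℕ → Bool

/-- The restrictions of `R` and `R'` to `{0,…,s} × {0,…,s}` agree. -/
def restrEq (R R' : Struc) (s : ℕ) : Prop :=
  ∀ x ≤ s, ∀ y ≤ s, R x y = R' x y

/-- `R` and `R'` are isomorphic structures. -/
def Isom (R R' : Struc) : Prop :=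
  ∃ e : ℕ ≃ ℕ, ∀ x y, R' (e x) (e y) = R x y

/-- `R↾s` embeds into `R'`: there is a map injective on `{0,…,s}` preserving the relation. -/
def EmbedsRestr (R : Struc) (s : ℕ) (R' : Struc) : Prop :=
  ∃ h : ℕ → ℕ, (∀ x ≤ s, ∀ y ≤ s, h x = h y → x = y) ∧
    (∀ x ≤ s, ∀ y ≤ s, R' (h x) (h y) = R x y)

/-- The learning domain of a family: all isomorphic copies of members of the family. -/
def LD {I : Type} (A : I → Struc) : Set Struc := {R | ∃ i, Isom R (A i)}

/-- A learner: its conjecture at stage `s` depends only on `R↾s`. -/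
def IsLearner {I : Type} (M : Struc → ℕ → Option I) : Prop :=
  ∀ R R' s, restrEq R R' s → M R s = M R' s

/-- `M` Ex-learns the family `A`. -/
def ExLearns {I : Type} (A : I → Struc) (M : Struc → ℕ → Option I) : Prop :=
  ∀ R i, Isom R (A i) → ∃ s₀, ∀ s ≥ s₀, M R s = some i

/-- `M` Fin-learns the family `A`. -/
def FinLearns {I : Type} (A : I → Struc) (M : Struc → ℕ → Option I) : Prop :=
  ∀ R i, Isom R (A i) →
    ∃ s₀, (∀ s < s₀, M R s = none) ∧ (∀ s ≥ s₀, M R s = some i)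

/-- `M` co-learns the family `A`. -/
def CoLearns {I : Type} (A : I → Struc) (M : Struc → ℕ → Option I) : Prop :=
  ∀ R i, Isom R (A i) → ∀ j, (∃ s, M R s = some j) ↔ j ≠ i

/-- `M` nUs-learns the family `A`: it Ex-learns it and never abandons the correct conjecture. -/
def NUsLearns {I : Type} (A : I → Struc) (M : Struc → ℕ → Option I) : Prop :=
  ExLearns A M ∧
    ∀ R i, Isom R (A i) → ∀ s, M R s = some i → ∀ t ≥ s, M R t = some i

/-- `M` Dec-learns the family `A`: it Ex-learns it and never repeats an abandoned conjecture. -/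
def DecLearns {I : Type} (A : I → Struc) (M : Struc → ℕ → Option I) : Prop :=
  ExLearns A M ∧
    ∀ R ∈ LD A, ∀ (j : I) (s : ℕ), M R s = some j → M R (s + 1) ≠ some j →
      ∀ t > s, M R t ≠ some j

/-- `M` PL-learns the family `A`: the unique conjecture output infinitely often is correct. -/
def PLLearns {I : Type} (A : I → Struc) (M : Struc → ℕ → Option I) : Prop :=
  ∀ R ∈ LD A, ∀ i, {s | M R s = some i}.Infinite ↔ Isom R (A i)

/-- The relation `E₀` on Baire space: eventual agreement. -/
def E0 (p q : ℕ → ℕ) : Prop := ∃ m, ∀ n ≥ m, p n = q n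

/-- The relation `E₃` on `ℕ → (ℕ → ℕ)`: columnwise `E₀`. -/
def E3 (p q : ℕ → ℕ → ℕ) : Prop := ∀ m, E0 (p m) (q m)

/-- The relation `E_range` on Baire space: equality of ranges. -/
def Erange (p q : ℕ → ℕ) : Prop := Set.range p = Set.range q

/-- `R` is a copy of ω: its relation is a linear order isomorphic to `(ℕ, ≤)`. -/
def IsCopyOfOmega (R : Struc) : Prop :=
  ∃ e : ℕ ≃ ℕ, ∀ x y, R (e x) (e y) = decide (x ≤ y)

/-- `R` is a copy of ω*: its relation is a linear order isomorphic to the dual of `(ℕ, ≤)`. -/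
def IsCopyOfOmegaStar (R : Struc) : Prop :=
  ∃ e : ℕ ≃ ℕ, ∀ x y, R (e x) (e y) = decide (y ≤ x)

/-- The family `{ω, ω*}` is Ex-learnable. -/
theorem omega_omegaStar_ExLearnable :
    ∃ M : Struc → ℕ → Option (Fin 2), IsLearner M ∧
      (∀ R, IsCopyOfOmega R → ∃ s₀, ∀ s ≥ s₀, M R s = some 0) ∧
      (∀ R, IsCopyOfOmegaStar R → ∃ s₀, ∀ s ≥ s₀, M R s = some 1) := by
  classical
  -- predCount / succCount of element 0
  set pc : Struc → ℕ → ℕ :=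
    fun R s => ((Finset.range (s+1)).filter (fun x => R x 0 = true)).card with hpc
  set sc : Struc → ℕ → ℕ :=
    fun R s => ((Finset.range (s+1)).filter (fun x => R 0 x = true)).card with hsc
  have key : ∀ R : Struc, ∀ e : ℕ ≃ ℕ, (∀ x y, R (e x) (e y) = decide (x ≤ y)) →
      ∃ s₀, ∀ s ≥ s₀, pc R s < sc R s := by
    intro R e he
    set k := e.symm 0 with hk
    have hek : e k = 0 := e.apply_symm_apply 0
    refine ⟨Finset.sup (Finset.Icc k (2*k+1)) e, fun s hs => ?_⟩
    have hpcle : pc R s ≤ k + 1 := by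
      have : pc R s = ((Finset.range (s+1)).filter (fun x => R x 0 = true)).card := rfl
      rw [this, ← Finset.card_range (k+1)]
      apply Finset.card_le_card_of_injOn e.symm
      · intro x hx
        simp only [Finset.mem_coe, Finset.mem_filter, Finset.mem_range] at hx
        have : R (e (e.symm x)) (e k) = decide (e.symm x ≤ k) := he _ _
        rw [e.apply_symm_apply, hek] at this
        rw [hx.2] at this
        have hle : e.symm x ≤ k := by
          by_contra hcon
          simp [hcon] at this
        simpa [Finset.mem_coe, Finset.mem_range, Nat.lt_succ_iff] using hle
      · intro a _ b _ hab
        exact e.symm.injective hab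
    have hscge : k + 2 ≤ sc R s := by
      have hsub : (Finset.Icc k (2*k+1)).image e ⊆
          (Finset.range (s+1)).filter (fun x => R 0 x = true) := by
        intro x hx
        simp only [Finset.mem_image] at hx
        obtain ⟨j, hj, rfl⟩ := hx
        simp only [Finset.mem_filter, Finset.mem_range, Nat.lt_succ_iff]
        constructor
        · exact le_trans (Finset.le_sup hj) hs
        · have : R (e k) (e j) = decide (k ≤ j) := he _ _
          rw [hek] at this
          rw [this]
          simp [(Finset.mem_Icc.mp hj).1]
      have hcard : ((Finset.Icc k (2*k+1)).image e).card = k + 2 := by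
        rw [Finset.card_image_of_injective _ e.injective, Nat.card_Icc]
        omega
      calc k + 2 = ((Finset.Icc k (2*k+1)).image e).card := hcard.symm
        _ ≤ _ := Finset.card_le_card hsub
    omega
  refine ⟨fun R s => if pc R s < sc R s then some 0 else some 1, ?_, ?_, ?_⟩
  · intro R R' s hre
    have h1 : pc R s = pc R' s := by
      simp only [hpc]
      congr 1
      apply Finset.filter_congr
      intro x hx
      rw [hre x (Nat.lt_succ_iff.mp (Finset.mem_range.mp hx)) 0 (Nat.zero_le s)]
    have h2 : sc R s = sc R' s := by
      simp only [hsc]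
      congr 1
      apply Finset.filter_congr
      intro x hx
      rw [hre 0 (Nat.zero_le s) x (Nat.lt_succ_iff.mp (Finset.mem_range.mp hx))]
    simp only [h1, h2]
  · rintro R ⟨e, he⟩
    obtain ⟨s₀, hs₀⟩ := key R e he
    exact ⟨s₀, fun s hs => by simp [hs₀ s hs]⟩
  · rintro R ⟨e, he⟩
    obtain ⟨s₀, hs₀⟩ := key (fun x y => R y x) e (fun x y => he y x)
    refine ⟨s₀, fun s hs => ?_⟩
    have h := hs₀ s hs
    have hps : pc (fun x y => R y x) s = sc R s := rfl
    have hsp : sc (fun x y => R y x) s = pc R s := rfl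
    rw [hps, hsp] at h
    simp [Nat.lt_asymm h]
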